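/- Let K be a non-empty closed subset of 2^{ω₁} satisfying conditions (R4) and (R8). Then every uncountable semi-bidiscrete sequence ⟨(x⁰_α, x¹_α) : α < ω₁⟩ in K is ω-determined. -/

import Mathlib

noncomputable section

open Cardinal Set

/-- The first uncountable ordinal `ω₁`. -/
def ω1 : Ordinal.{0} := (Cardinal.aleph 1).ord

/-- We represent an element of the Cantor cube `2^α` (for an ordinal `α`) as a function
`Ordinal → Bool` vanishing on coordinates `≥ α`. `truncate α x` is the restriction
`x↾α` of `x` to `α` in this representation. -/
def truncate (α : Ordinal.{0}) (x : Ordinal.{0} → Bool) : Ordinal.{0} → Bool :=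
  fun β => if β < α then x β else false

/-- Condition (R4) for `K ⊆ 2^{ω₁}` with split points `s_α ∈ 2^α` (for `ω ≤ α < ω₁`):
(i) both extensions of `s_α` by `0` and by `1` at coordinate `α` belong to
`K_{α+1} = {x↾(α+1) : x ∈ K}`, and (ii) whenever `u, v ∈ K_{α+1}` satisfy `u↾α = v↾α`
and `u(α) ≠ v(α)`, then `u↾α = s_α`. -/
def CondR4 (K : Set (Ordinal.{0} → Bool)) (s : Ordinal.{0} → Ordinal.{0} → Bool) : Prop :=
  ∀ α : Ordinal.{0}, Ordinal.omega0 ≤ α → α < ω1 →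
    truncate α (s α) = s α ∧
    (∀ b : Bool, Function.update (s α) α b ∈ truncate (α + 1) '' K) ∧
    (∀ u ∈ truncate (α + 1) '' K, ∀ v ∈ truncate (α + 1) '' K,
      truncate α u = truncate α v → u α ≠ v α → truncate α u = s α)

/-- Condition (R8): whenever `ω ≤ α < β < ω₁`, `s_β↾α ≠ s_α`. -/
def CondR8 (s : Ordinal.{0} → Ordinal.{0} → Bool) : Prop :=
  ∀ α β : Ordinal.{0}, Ordinal.omega0 ≤ α → α < β → β < ω1 →
    truncate α (s β) ≠ s α

lemma truncate_truncate {α β : Ordinal.{0}} (h : α ≤ β) (x : Ordinal.{0} → Bool) :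
    truncate α (truncate β x) = truncate α x := by
  funext γ
  unfold truncate
  by_cases hγ : γ < α
  · simp [hγ, lt_of_lt_of_le hγ h]
  · simp [hγ]

/-- each point passes through at most one split node (from R8) -/
lemma one_node {s : Ordinal.{0} → Ordinal.{0} → Bool} (hR8 : CondR8 s)
    {x : Ordinal.{0} → Bool} {α β : Ordinal.{0}}
    (hωα : Ordinal.omega0 ≤ α) (hαβ : α < β) (hβ : β < ω1)
    (hxα : truncate α x = s α) (hxβ : truncate β x = s β) : False := by
  apply hR8 α β hωα hαβ hβ
  rw [← hxβ, truncate_truncate hαβ.le, hxα]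

/-- the first difference of two points of K agreeing on ω is a split node -/
lemma exists_split {K : Set (Ordinal.{0} → Bool)} {s : Ordinal.{0} → Ordinal.{0} → Bool}
    (hR4 : CondR4 K s) (hKsub : ∀ x ∈ K, truncate ω1 x = x)
    {x y : Ordinal.{0} → Bool} (hx : x ∈ K) (hy : y ∈ K)
    (hxy : truncate Ordinal.omega0 x = truncate Ordinal.omega0 y) (hne : x ≠ y) :
    ∃ δ, Ordinal.omega0 ≤ δ ∧ δ < ω1 ∧ truncate δ x = s δ ∧ truncate δ y = s δ ∧
      x δ ≠ y δ := by
  have hD : {δ : Ordinal.{0} | x δ ≠ y δ}.Nonempty := by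
    rw [Function.ne_iff] at hne; exact hne
  set δ := Ordinal.lt_wf.min _ hD with hδdef
  have hδmem : x δ ≠ y δ := Ordinal.lt_wf.min_mem _ hD
  have hmin : ∀ γ, γ < δ → x γ = y γ := by
    intro γ hγ
    by_contra hne'
    exact Ordinal.lt_wf.not_lt_min _ hne' hγ
  have hωδ : Ordinal.omega0 ≤ δ := by
    by_contra h
    push_neg at h
    apply hδmem
    have := congrFun hxy δ
    simpa [truncate, h] using this
  have hδω1 : δ < ω1 := by
    by_contra h
    push_neg at h
    apply hδmem
    have hx' := congrFun (hKsub x hx) δ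
    have hy' := congrFun (hKsub y hy) δ
    rw [truncate, if_neg (not_lt.2 h)] at hx' hy'
    rw [← hx', ← hy']
  have htr : truncate δ x = truncate δ y := by
    funext γ
    unfold truncate
    by_cases hγ : γ < δ
    · simp [hγ, hmin γ hγ]
    · simp [hγ]
  have hδ1 : δ < δ + 1 := by rw [Ordinal.add_one_eq_succ]; exact Order.lt_succ δ
  have key := (hR4 δ hωδ hδω1).2.2 (truncate (δ+1) x) ⟨x, hx, rfl⟩
    (truncate (δ+1) y) ⟨y, hy, rfl⟩
    (by rw [truncate_truncate hδ1.le, truncate_truncate hδ1.le, htr])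
    (by simpa [truncate, hδ1] using hδmem)
  rw [truncate_truncate hδ1.le] at key
  exact ⟨δ, hωδ, hδω1, key, htr ▸ key, hδmem⟩

/-- the fiber of K over a fixed ω-trace has at most two elements -/
lemma fiber_le_two {K : Set (Ordinal.{0} → Bool)} {s : Ordinal.{0} → Ordinal.{0} → Bool}
    (hR4 : CondR4 K s) (hR8 : CondR8 s) (hKsub : ∀ x ∈ K, truncate ω1 x = x)
    {x y z : Ordinal.{0} → Bool} (hx : x ∈ K) (hy : y ∈ K) (hz : z ∈ K)
    (hxy : truncate Ordinal.omega0 x = truncate Ordinal.omega0 y)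
    (hxz : truncate Ordinal.omega0 x = truncate Ordinal.omega0 z) :
    x = y ∨ x = z ∨ y = z := by
  by_contra h
  push_neg at h
  obtain ⟨hne1, hne2, hne3⟩ := h
  obtain ⟨δ1, hω1', hlt1, hx1, hy1, hd1⟩ := exists_split hR4 hKsub hx hy hxy hne1
  obtain ⟨δ2, hω2', hlt2, hx2, hz2, hd2⟩ := exists_split hR4 hKsub hx hz hxz hne2
  have hδ12 : δ1 = δ2 := by
    rcases lt_trichotomy δ1 δ2 with h' | h' | h'
    · exact absurd (one_node hR8 hω1' h' hlt2 hx1 hx2) not_false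
    · exact h'
    · exact absurd (one_node hR8 hω2' h' hlt1 hx2 hx1) not_false
  subst hδ12
  obtain ⟨δ3, hω3', hlt3, hy3, hz3, hd3⟩ := exists_split hR4 hKsub hy hz
    (hxy ▸ hxz) hne3
  have hyz : y δ1 = z δ1 := by
    cases hby : y δ1 <;> cases hbz : z δ1 <;> cases hbx : x δ1 <;>
      simp_all
  have htryz : truncate δ1 y = truncate δ1 z := by rw [hy1, hz2]
  have hlt13 : δ1 < δ3 := by
    rcases lt_trichotomy δ1 δ3 with h' | h' | h'
    · exact h'
    · exact absurd (h' ▸ hyz) hd3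
    · exfalso
      apply hd3
      have := congrFun htryz δ3
      simpa [truncate, h'] using this
  exact one_node hR8 hω1' hlt13 hlt3 hy1 hy3

/-- A sequence `⟨(x⁰_α, x¹_α) : α ∈ I⟩` (for a linearly ordered index `I`) of pairs of
points of a space `X` is a *semi-bidiscrete sequence* in `X` if there are continuous
real-valued functions `f_α` with `f_α(x⁰_α) = 0`, `f_α(x¹_α) = 1`,
`f_α(x⁰_β) = f_α(x¹_β)` whenever `β < α`, and `f_α(x⁰_β) = 1 → f_α(x¹_β) = 1`
whenever `β > α`. -/
def IsSemiBidiscreteSeq {X : Type*} [TopologicalSpace X] {I : Type*} [LinearOrder I]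
    (x0 x1 : I → X) : Prop :=
  ∃ f : I → C(X, ℝ), ∀ α,
    f α (x0 α) = 0 ∧ f α (x1 α) = 1 ∧
    (∀ β, β < α → f α (x0 β) = f α (x1 β)) ∧
    (∀ β, α < β → f α (x0 β) = 1 → f α (x1 β) = 1)

/-- A family of pairs of points of `2^{ω₁}` is *ω-determined* if for every `s ∈ 2^ω`
the set of indices `α` with `x⁰_α↾ω = x¹_α↾ω = s` is countable. -/
def OmegaDetermined {I : Type*} (x0 x1 : I → (Ordinal.{0} → Bool)) : Prop :=
  ∀ t : Ordinal.{0} → Bool,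
    {α : I | truncate Ordinal.omega0 (x0 α) = t ∧
      truncate Ordinal.omega0 (x1 α) = t}.Countable

/-- Let `K` be a non-empty closed subset of `2^{ω₁}` satisfying conditions (R4) and (R8).
Then every (uncountable) semi-bidiscrete sequence `⟨(x⁰_α, x¹_α) : α < ω₁⟩` in `K` is
ω-determined. -/
theorem semiBidiscrete_omega_determined
    (K : Set (Ordinal.{0} → Bool)) (hKne : K.Nonempty) (hKcl : IsClosed K)
    (hKsub : ∀ x ∈ K, truncate ω1 x = x)
    (s : Ordinal.{0} → Ordinal.{0} → Bool) (hR4 : CondR4 K s) (hR8 : CondR8 s)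
    (x0 x1 : ↥(Set.Iio ω1) → ↥K)
    (hsb : IsSemiBidiscreteSeq x0 x1) :
    OmegaDetermined (fun α => (x0 α : Ordinal.{0} → Bool))
      (fun α => (x1 α : Ordinal.{0} → Bool)) := by
  intro t
  obtain ⟨f, hf⟩ := hsb
  have hne01 : ∀ α, x0 α ≠ x1 α := by
    intro α h
    have h0 := (hf α).1
    have h1 := (hf α).2.1
    rw [h] at h0
    rw [h0] at h1
    norm_num at h1
  have hpair : ∀ α β, α < β → x0 α = x0 β → x1 α = x1 β → False := by
    intro α β hαβ h0 h1
    have h2 := (hf β).2.2.1 α hαβ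
    rw [h0, h1, (hf β).1, (hf β).2.1] at h2
    norm_num at h2
  rcases Set.eq_empty_or_nonempty {α : ↥(Set.Iio ω1) |
      truncate Ordinal.omega0 ((fun α => (x0 α : Ordinal.{0} → Bool)) α) = t ∧
      truncate Ordinal.omega0 ((fun α => (x1 α : Ordinal.{0} → Bool)) α) = t} with hS | hS
  · rw [hS]; exact Set.countable_empty
  obtain ⟨α₀, hα₀⟩ := hS
  simp only [Set.mem_setOf_eq] at hα₀
  have hfib : ∀ (u : ↥K), truncate Ordinal.omega0 (u : Ordinal.{0} → Bool) = t →
      u = x0 α₀ ∨ u = x1 α₀ := by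
    intro u hu
    have h3 := fiber_le_two hR4 hR8 hKsub (x0 α₀).2 (x1 α₀).2 u.2
      (by rw [hα₀.1, hα₀.2]) (by rw [hα₀.1, hu])
    rcases h3 with h | h | h
    · exact absurd (Subtype.ext h) (hne01 α₀)
    · exact Or.inl (Subtype.ext h.symm)
    · exact Or.inr (Subtype.ext h.symm)
  have hsub : ∀ (p q : ↥K), {α | x0 α = p ∧ x1 α = q}.Subsingleton := by
    intro p q α hα β hβ
    by_contra hne
    rcases lt_or_gt_of_ne hne with h | h
    · exact hpair α β h (hα.1.trans hβ.1.symm) (hα.2.trans hβ.2.symm)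
    · exact hpair β α h (hβ.1.trans hα.1.symm) (hβ.2.trans hα.2.symm)
  have cover : {α : ↥(Set.Iio ω1) |
      truncate Ordinal.omega0 ((fun α => (x0 α : Ordinal.{0} → Bool)) α) = t ∧
      truncate Ordinal.omega0 ((fun α => (x1 α : Ordinal.{0} → Bool)) α) = t} ⊆
      {α | x0 α = x0 α₀ ∧ x1 α = x1 α₀} ∪ {α | x0 α = x1 α₀ ∧ x1 α = x0 α₀} := by
    intro α hα
    simp only [Set.mem_setOf_eq] at hα
    rcases hfib (x0 α) hα.1 with h0 | h0 <;> rcases hfib (x1 α) hα.2 with h1 | h1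
    · exact absurd (h0.trans h1.symm) (hne01 α)
    · exact Or.inl ⟨h0, h1⟩
    · exact Or.inr ⟨h0, h1⟩
    · exact absurd (h0.trans h1.symm) (hne01 α)
  exact Set.Countable.mono cover
    (((hsub _ _).countable).union ((hsub _ _).countable))


end
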